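/- arXiv:0905.4066 — 2 statements merged into one kernel-verified Lean document; each statement's English description precedes it below -/
import Mathlib

section
/- (Soundness of the interpretation) If Γ ⊢ t : ω is derivable in the simply typed λ-calculus, then the relation {(γ, s) | s ∈ [[t]]_γ} is a simulation from !Γ = !ω₁* ⊗ ... ⊗ !ωₙ* to ω*. -/
universe u

/-- An interaction system on a set of states `S`. -/
structure IS (S : Type u) where
  A : S → Type u
  D : (s : S) → A s → Type u
  n : (s : S) → (a : A s) → D s a → S

/-- `r` is a simulation from `w₁` to `w₂`. -/
def IsSim {S₁ S₂ : Type u} (w₁ : IS S₁) (w₂ : IS S₂) (r : S₁ → S₂ → Prop) : Prop :=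
  ∀ s₁ s₂, r s₁ s₂ → ∀ a₁ : w₁.A s₁, ∃ a₂ : w₂.A s₂,
    ∀ d₂ : w₂.D s₂ a₂, ∃ d₁ : w₁.D s₁ a₁, r (w₁.n s₁ a₁ d₁) (w₂.n s₂ a₂ d₂)

/-- Relational composition: `(relComp r₂ r₁) s₁ s₃ ↔ ∃ s₂, r₁ s₁ s₂ ∧ r₂ s₂ s₃`. -/
def relComp {S₁ S₂ S₃ : Type u} (r₂ : S₂ → S₃ → Prop) (r₁ : S₁ → S₂ → Prop) :
    S₁ → S₃ → Prop :=
  fun s₁ s₃ => ∃ s₂, r₁ s₁ s₂ ∧ r₂ s₂ s₃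

/-- Synchronous product of interaction systems. -/
def tensor {S₁ S₂ : Type u} (w₁ : IS S₁) (w₂ : IS S₂) : IS (S₁ × S₂) where
  A s := w₁.A s.1 × w₂.A s.2
  D s a := w₁.D s.1 a.1 × w₂.D s.2 a.2
  n s a d := (w₁.n s.1 a.1 d.1, w₂.n s.2 a.2 d.2)

/-- The unit interaction system `1` on a singleton state space. -/
def unitIS : IS PUnit.{u+1} where
  A _ := PUnit
  D _ _ := PUnit
  n _ _ _ := ⟨⟩

/-- The linear arrow `w₂ ⊸ w₃`. -/
def lolli {S₂ S₃ : Type u} (w₂ : IS S₂) (w₃ : IS S₃) : IS (S₂ × S₃) where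
  A s := Σ f : w₂.A s.1 → w₃.A s.2, ∀ a₂ : w₂.A s.1, w₃.D s.2 (f a₂) → w₂.D s.1 a₂
  D s a := Σ a₂ : w₂.A s.1, w₃.D s.2 (a.1 a₂)
  n s a d := (w₂.n s.1 d.1 (a.2 d.1 d.2), w₃.n s.2 (a.1 d.1) d.2)

/-- Lists of actions for a list of states (multithreading). -/
def listA {S : Type u} (w : IS S) : List S → Type u
  | [] => PUnit
  | s :: l => w.A s × listA w l

/-- Lists of reactions to a list of actions. -/
def listD {S : Type u} (w : IS S) : (l : List S) → listA w l → Type u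
  | [], _ => PUnit
  | _ :: l, a => w.D _ a.1 × listD w l a.2

/-- Componentwise next states. -/
def listN {S : Type u} (w : IS S) : (l : List S) → (a : listA w l) → listD w l a → List S
  | [], _, _ => []
  | s :: l, a, d => w.n s a.1 d.1 :: listN w l a.2 d.2

/-- The exponential `!w`, on finite multisets of states. -/
def bang {S : Type u} (w : IS S) : IS (Multiset S) where
  A μ := Σ' (l : List S) (_ : (↑l : Multiset S) = μ), listA w l
  D _ a := listD w a.1 a.2.2
  n _ a d := ↑(listN w a.1 a.2.2 d)

/-- Pointwise lifting of a relation to finite multisets. -/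
def bangRel {S₁ S₂ : Type u} (r : S₁ → S₂ → Prop) :
    Multiset S₁ → Multiset S₂ → Prop :=
  fun μ₁ μ₂ => ∃ (l₁ : List S₁) (l₂ : List S₂), (↑l₁ : Multiset S₁) = μ₁ ∧ (↑l₂ : Multiset S₂) = μ₂ ∧
    List.Forall₂ r l₁ l₂

/-- Simple types over base type variables. -/
inductive Ty : Type
  | base : ℕ → Ty
  | arrow : Ty → Ty → Ty

/-- Typed variables in a context. -/
inductive Var : List Ty → Ty → Type
  | vz {Γ ω} : Var (ω :: Γ) ω
  | vs {Γ ω ω'} : Var Γ ω → Var (ω' :: Γ) ω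

/-- Intrinsically typed λ-terms. -/
inductive Tm : List Ty → Ty → Type
  | var {Γ ω} : Var Γ ω → Tm Γ ω
  | app {Γ ω ω'} : Tm Γ (.arrow ω ω') → Tm Γ ω → Tm Γ ω'
  | lam {Γ ω ω'} : Tm (ω :: Γ) ω' → Tm Γ (.arrow ω ω')

variable (ρ : ℕ → Type) (wρ : ∀ i, IS (ρ i))

/-- `|ω|`: the set of states of the interpretation of type `ω`. -/
def St : Ty → Type
  | .base i => ρ i
  | .arrow ω ω' => Multiset (St ω) × St ω'

/-- Interpretation of types: `X* = ρ(X)`, `(ω → ω')* = !ω* ⊸ ω'*`. -/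
def tyIS : (ω : Ty) → IS (St ρ ω)
  | .base i => wρ i
  | .arrow ω ω' => lolli (bang (tyIS ω)) (tyIS ω')

/-- Environments for a context: a finite multiset of states for each variable. -/
def Env : List Ty → Type
  | [] => PUnit
  | ω :: Γ => Multiset (St ρ ω) × Env Γ

/-- The empty environment. -/
def Env.zero : (Γ : List Ty) → Env ρ Γ
  | [] => ⟨⟩
  | _ :: Γ => (0, Env.zero Γ)

/-- Pointwise sum of environments. -/
def Env.add : {Γ : List Ty} → Env ρ Γ → Env ρ Γ → Env ρ Γ
  | [], _, _ => ⟨⟩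
  | _ :: _, γ, δ => (γ.1 + δ.1, Env.add γ.2 δ.2)

/-- Sum of a list of environments. -/
def envSum {Γ : List Ty} (L : List (Env ρ Γ)) : Env ρ Γ :=
  L.foldr (Env.add ρ) (Env.zero ρ Γ)

/-- The environment assigning the singleton multiset `[s]` to the variable `v`
and the empty multiset to every other variable. -/
def oneAt : {Γ : List Ty} → {ω : Ty} → Var Γ ω → St ρ ω → Env ρ Γ
  | _, _, .vz, s => ({s}, Env.zero ρ _)
  | _, _, .vs v, s => (0, oneAt v s)

/-- The interpretation `!Γ = !ω₁* ⊗ ⋯ ⊗ !ωₙ*` of a context. -/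
def ctxIS : (Γ : List Ty) → IS (Env ρ Γ)
  | [] => unitIS
  | ω :: Γ => tensor (bang (tyIS ρ wρ ω)) (ctxIS Γ)

/-- The relational interpretation of terms. -/
def interp : {Γ : List Ty} → {ω : Ty} → Tm Γ ω → Env ρ Γ → Set (St ρ ω)
  | _, _, .var v, γ => {s | γ = oneAt ρ v s}
  | _, _, .app t u, γ => {s | ∃ (γ₀ : Env ρ _) (L : List (Env ρ _ × St ρ _)),
      (∀ p ∈ L, p.2 ∈ interp u p.1) ∧
      γ = Env.add ρ γ₀ (envSum ρ (L.map Prod.fst)) ∧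
      ((↑(L.map Prod.snd) : Multiset _), s) ∈ interp t γ₀}
  | _, _, .lam t, γ => {p | p.2 ∈ interp t (p.1, γ)}


section Aux

theorem listN_length {S : Type u} (w : IS S) :
    ∀ (l : List S) (a : listA w l) (d : listD w l a), (listN w l a d).length = l.length
  | [], _, _ => rfl
  | s :: l, a, d => by simp [listN, listN_length w l a.2 d.2]

/-- Pointwise simulation on lists of states. -/
theorem listSim {S₁ S₂ : Type u} {w₁ : IS S₁} {w₂ : IS S₂} {r : S₁ → S₂ → Prop}
    (hr : IsSim w₁ w₂ r) :
    ∀ {l₁ : List S₁} {l₂ : List S₂}, List.Forall₂ r l₁ l₂ → ∀ a : listA w₁ l₁,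
    ∃ (b : listA w₂ l₂) (back : listD w₂ l₂ b → listD w₁ l₁ a),
      ∀ d, List.Forall₂ r (listN w₁ l₁ a (back d)) (listN w₂ l₂ b d) := by
  intro l₁ l₂ h
  induction h with
  | nil => exact fun a => ⟨⟨⟩, fun _ => ⟨⟩, fun _ => List.Forall₂.nil⟩
  | cons hrel _ ih =>
    intro a
    obtain ⟨b0, hb0⟩ := hr _ _ hrel a.1
    obtain ⟨bs, back, hback⟩ := ih a.2
    exact ⟨(b0, bs), fun d => ⟨(hb0 d.1).choose, back d.2⟩,
      fun d => List.Forall₂.cons (hb0 d.1).choose_spec (hback d.2)⟩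

/-- Splitting an action of `!w` over a sum of multisets. -/
theorem bangSplit {S : Type u} (w : IS S) :
    ∀ (l : List S) (α : listA w l) (μ₁ μ₂ : Multiset S), (↑l : Multiset S) = μ₁ + μ₂ →
    ∃ (a₁ : (bang w).A μ₁) (a₂ : (bang w).A μ₂)
      (comb : (bang w).D μ₁ a₁ → (bang w).D μ₂ a₂ → listD w l α),
      ∀ d₁ d₂, (↑(listN w l α (comb d₁ d₂)) : Multiset S) =
        (bang w).n μ₁ a₁ d₁ + (bang w).n μ₂ a₂ d₂ := by
  intro l
  induction l with
  | nil =>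
    intro α μ₁ μ₂ h
    have h0 : μ₁ + μ₂ = 0 := by simpa using h.symm
    obtain ⟨e1, e2⟩ := add_eq_zero.mp h0
    subst e1; subst e2
    exact ⟨⟨[], rfl, ⟨⟩⟩, ⟨[], rfl, ⟨⟩⟩, fun _ _ => ⟨⟩, fun _ _ => rfl⟩
  | cons s l ih =>
    intro α μ₁ μ₂ h
    have hs : s ∈ μ₁ + μ₂ := by
      rw [← h, ← Multiset.cons_coe]; exact Multiset.mem_cons_self _ _
    rcases Multiset.mem_add.mp hs with hs1 | hs2
    · obtain ⟨μ₁', rfl⟩ := Multiset.exists_cons_of_mem hs1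
      have hl : (↑l : Multiset S) = μ₁' + μ₂ := by
        have h2 : (s ::ₘ (↑l : Multiset S)) = s ::ₘ (μ₁' + μ₂) := by
          rw [← Multiset.cons_add, Multiset.cons_coe]; exact h
        exact (Multiset.cons_inj_right s).mp h2
      obtain ⟨b₁, b₂, comb, hcomb⟩ := ih α.2 μ₁' μ₂ hl
      refine ⟨⟨s :: b₁.1, by rw [← Multiset.cons_coe, b₁.2.1], (α.1, b₁.2.2)⟩, b₂,
        fun d₁ d₂ => (d₁.1, comb d₁.2 d₂), fun d₁ d₂ => ?_⟩
      show (↑(w.n s α.1 d₁.1 :: listN w l α.2 (comb d₁.2 d₂)) : Multiset S) = _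
      rw [← Multiset.cons_coe, hcomb d₁.2 d₂]
      rw [← Multiset.cons_add]
      rfl
    · obtain ⟨μ₂', rfl⟩ := Multiset.exists_cons_of_mem hs2
      have hl : (↑l : Multiset S) = μ₁ + μ₂' := by
        have h2 : (s ::ₘ (↑l : Multiset S)) = s ::ₘ (μ₁ + μ₂') := by
          rw [← Multiset.add_cons, Multiset.cons_coe]; exact h
        exact (Multiset.cons_inj_right s).mp h2
      obtain ⟨b₁, b₂, comb, hcomb⟩ := ih α.2 μ₁ μ₂' hl
      refine ⟨b₁, ⟨s :: b₂.1, by rw [← Multiset.cons_coe, b₂.2.1], (α.1, b₂.2.2)⟩,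
        fun d₁ d₂ => (d₂.1, comb d₁ d₂.2), fun d₁ d₂ => ?_⟩
      show (↑(w.n s α.1 d₂.1 :: listN w l α.2 (comb d₁ d₂.2)) : Multiset S) = _
      rw [← Multiset.cons_coe, hcomb d₁ d₂.2]
      rw [← Multiset.add_cons]
      rfl

theorem bangZero {S : Type u} (w : IS S) (a : (bang w).A 0) :
    ∃ d, (bang w).n 0 a d = 0 := by
  obtain ⟨l, h, α⟩ := a
  cases l with
  | nil => exact ⟨⟨⟩, rfl⟩
  | cons s l => simp at h

theorem ctxZero (ρ : ℕ → Type) (wρ : ∀ i, IS (ρ i)) :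
    ∀ (Γ : List Ty) (a : (ctxIS ρ wρ Γ).A (Env.zero ρ Γ)),
    ∃ d, (ctxIS ρ wρ Γ).n _ a d = Env.zero ρ Γ := by
  intro Γ
  induction Γ with
  | nil => exact fun a => ⟨⟨⟩, rfl⟩
  | cons ω Γ ih =>
    intro a
    obtain ⟨d₁, h₁⟩ := bangZero (tyIS ρ wρ ω) a.1
    obtain ⟨d₂, h₂⟩ := ih a.2
    exact ⟨(d₁, d₂), Prod.ext h₁ h₂⟩

theorem ctxSplit (ρ : ℕ → Type) (wρ : ∀ i, IS (ρ i)) :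
    ∀ {Γ : List Ty} (γ₁ γ₂ : Env ρ Γ) (a : (ctxIS ρ wρ Γ).A (Env.add ρ γ₁ γ₂)),
    ∃ (a₁ : (ctxIS ρ wρ Γ).A γ₁) (a₂ : (ctxIS ρ wρ Γ).A γ₂)
      (comb : (ctxIS ρ wρ Γ).D γ₁ a₁ → (ctxIS ρ wρ Γ).D γ₂ a₂ → (ctxIS ρ wρ Γ).D _ a),
      ∀ d₁ d₂, (ctxIS ρ wρ Γ).n _ a (comb d₁ d₂) =
        Env.add ρ ((ctxIS ρ wρ Γ).n γ₁ a₁ d₁) ((ctxIS ρ wρ Γ).n γ₂ a₂ d₂) := by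
  intro Γ
  induction Γ with
  | nil => exact fun γ₁ γ₂ a => ⟨⟨⟩, ⟨⟩, fun _ _ => ⟨⟩, fun _ _ => rfl⟩
  | cons ω Γ ih =>
    intro γ₁ γ₂ a
    obtain ⟨b₁, b₂, combb, hb⟩ := bangSplit (tyIS ρ wρ ω) a.1.1 a.1.2.2 γ₁.1 γ₂.1 a.1.2.1
    obtain ⟨c₁, c₂, combc, hc⟩ := ih γ₁.2 γ₂.2 a.2
    refine ⟨(b₁, c₁), (b₂, c₂), fun d₁ d₂ => (combb d₁.1 d₂.1, combc d₁.2 d₂.2),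
      fun d₁ d₂ => Prod.ext ?_ (hc d₁.2 d₂.2)⟩
    exact hb d₁.1 d₂.1

theorem sumSplit (ρ : ℕ → Type) (wρ : ∀ i, IS (ρ i)) {Γ : List Ty} :
    ∀ (L : List (Env ρ Γ)) (a : (ctxIS ρ wρ Γ).A (envSum ρ L)),
    ∃ (as : listA (ctxIS ρ wρ Γ) L)
      (comb : listD (ctxIS ρ wρ Γ) L as → (ctxIS ρ wρ Γ).D _ a),
      ∀ ds, (ctxIS ρ wρ Γ).n _ a (comb ds) = envSum ρ (listN (ctxIS ρ wρ Γ) L as ds) := by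
  intro L
  induction L with
  | nil =>
    intro a
    obtain ⟨d, hd⟩ := ctxZero ρ wρ Γ a
    exact ⟨⟨⟩, fun _ => d, fun _ => hd⟩
  | cons γ L ih =>
    intro a
    obtain ⟨a₁, a₂, comb, hcomb⟩ := ctxSplit ρ wρ γ (envSum ρ L) a
    obtain ⟨as, combL, hL⟩ := ih a₂
    refine ⟨(a₁, as), fun ds => comb ds.1 (combL ds.2), fun ds => ?_⟩
    show (ctxIS ρ wρ Γ).n (Env.add ρ γ (envSum ρ L)) a (comb ds.1 (combL ds.2)) = _
    rw [hcomb ds.1 (combL ds.2), hL ds.2]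
    rfl

theorem varCase (ρ : ℕ → Type) (wρ : ∀ i, IS (ρ i)) :
    ∀ {Γ : List Ty} {ω : Ty} (v : Var Γ ω) (s : St ρ ω)
      (a : (ctxIS ρ wρ Γ).A (oneAt ρ v s)),
    ∃ (b : (tyIS ρ wρ ω).A s)
      (back : (tyIS ρ wρ ω).D s b → (ctxIS ρ wρ Γ).D _ a),
      ∀ d, (ctxIS ρ wρ Γ).n _ a (back d) = oneAt ρ v ((tyIS ρ wρ ω).n s b d) := by
  intro Γ ω v
  induction v with
  | @vz Γ ω =>
    intro s a
    obtain ⟨ab, at'⟩ := a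
    obtain ⟨l, h, α⟩ := ab
    have hl : l = [s] := Multiset.coe_eq_singleton.mp h
    subst hl
    obtain ⟨dz, hdz⟩ := ctxZero ρ wρ Γ at'
    refine ⟨α.1, fun d => ((d, ⟨⟩), dz), fun d => Prod.ext ?_ (hdz)⟩
    rfl
  | @vs Γ ω ω' v ih =>
    intro s a
    obtain ⟨b, back, hback⟩ := ih s a.2
    obtain ⟨dz, hdz⟩ := bangZero (tyIS ρ wρ ω') a.1
    exact ⟨b, fun d => (dz, back d), fun d => Prod.ext hdz (hback d)⟩

theorem forall₂_of_pairs {A B : Type u} {r : A → B → Prop} :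
    ∀ (L : List (A × B)), (∀ p ∈ L, r p.1 p.2) →
      List.Forall₂ r (L.map Prod.fst) (L.map Prod.snd)
  | [], _ => List.Forall₂.nil
  | p :: L, h => List.Forall₂.cons (h p List.mem_cons_self)
      (forall₂_of_pairs L fun q hq => h q (List.mem_cons_of_mem _ hq))

end Aux

/-- Soundness of the interpretation: for any typed term `Γ ⊢ t : ω`, the
relation `{(γ, s) | s ∈ [[t]]_γ}` is a simulation from `!Γ` to `ω*`. -/
theorem soundness (ρ : ℕ → Type) (wρ : ∀ i, IS (ρ i))
    {Γ : List Ty} {ω : Ty} (t : Tm Γ ω) :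
    IsSim (ctxIS ρ wρ Γ) (tyIS ρ wρ ω) (fun γ s => s ∈ interp ρ t γ) := by
  induction t with
  | @var Γ ω v =>
    intro γ s hs a₁
    simp only [interp, Set.mem_setOf_eq] at hs
    subst hs
    obtain ⟨b, back, hback⟩ := varCase ρ wρ v s a₁
    refine ⟨b, fun d => ⟨back d, ?_⟩⟩
    simp only [interp, Set.mem_setOf_eq]
    exact hback d
  | @app Γ ω ω' t u iht ihu =>
    intro γ s hs a₁
    simp only [interp, Set.mem_setOf_eq] at hs
    obtain ⟨γ₀, L, hL, rfl, ht⟩ := hs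
    obtain ⟨a₀, aL, comb, hcomb⟩ := ctxSplit ρ wρ γ₀ (envSum ρ (L.map Prod.fst)) a₁
    obtain ⟨as, combL, hcombL⟩ := sumSplit ρ wρ (L.map Prod.fst) aL
    obtain ⟨bs, back, hback⟩ := listSim ihu (forall₂_of_pairs L hL) as
    set B : (bang (tyIS ρ wρ ω)).A (↑(L.map Prod.snd)) := ⟨L.map Prod.snd, rfl, bs⟩ with hB
    obtain ⟨fg, hfg⟩ := iht γ₀ ((↑(L.map Prod.snd) : Multiset _), s) ht a₀
    refine ⟨fg.1 B, fun d' => ?_⟩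
    obtain ⟨d₀, hd₀⟩ := hfg ⟨B, d'⟩
    set dL := back (fg.2 B d') with hdL
    refine ⟨comb d₀ (combL dL), ?_⟩
    simp only [interp, Set.mem_setOf_eq]
    have hforall := hback (fg.2 B d')
    have hlen₁ : (listN (ctxIS ρ wρ Γ) (L.map Prod.fst) as dL).length
        = (listN (tyIS ρ wρ ω) (L.map Prod.snd) bs (fg.2 B d')).length := by
      exact (listN_length _ _ _ _).trans ((by simp : (L.map Prod.fst).length = (L.map Prod.snd).length).trans (listN_length _ _ _ _).symm)
    refine ⟨(ctxIS ρ wρ Γ).n γ₀ a₀ d₀,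
      (listN (ctxIS ρ wρ Γ) (L.map Prod.fst) as dL).zip
        (listN (tyIS ρ wρ ω) (L.map Prod.snd) bs (fg.2 B d')), ?_, ?_, ?_⟩
    · intro p hp
      exact (List.forall₂_iff_zip.mp hforall).2 hp
    · rw [hcomb d₀ (combL dL), hcombL dL]
      congr 1
      rw [List.map_fst_zip (le_of_eq hlen₁)]
    · have h2 : ((listN (ctxIS ρ wρ Γ) (L.map Prod.fst) as dL).zip
          (listN (tyIS ρ wρ ω) (L.map Prod.snd) bs (fg.2 B d'))).map Prod.snd
          = listN (tyIS ρ wρ ω) (L.map Prod.snd) bs (fg.2 B d') := by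
        rw [List.map_snd_zip (le_of_eq hlen₁.symm)]
      rw [h2]
      exact hd₀
  | @lam Γ ω ω' t ih =>
    intro γ p hp a₁
    simp only [interp, Set.mem_setOf_eq] at hp
    have F : ∀ b : (bang (tyIS ρ wρ ω)).A p.1, ∃ a₂ : (tyIS ρ wρ ω').A p.2,
        ∀ d₂, ∃ d₁ : (ctxIS ρ wρ (ω :: Γ)).D (p.1, γ) (b, a₁),
          ((tyIS ρ wρ ω').n p.2 a₂ d₂) ∈
            interp ρ t ((ctxIS ρ wρ (ω :: Γ)).n (p.1, γ) (b, a₁) d₁) :=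
      fun b => ih (p.1, γ) p.2 hp (b, a₁)
    choose f hf using F
    choose bk hbk using hf
    refine ⟨⟨f, fun b d => (bk b d).1⟩, fun d₂ => ⟨(bk d₂.1 d₂.2).2, ?_⟩⟩
    simp only [interp, Set.mem_setOf_eq]
    exact hbk d₂.1 d₂.2
end

section
/- (Soundness for differential terms) If Γ ⊢ t : ω is derivable in the typed differential λ-calculus, then the relation {(γ, s) | s ∈ [[t]]_γ} is a simulation from !Γ to ω*. In particular, given Γ ⊢ t : ω → ω' and Γ ⊢ u : ω with sound interpretations, the interpretation of D t · u, defined by (μ, s') ∈ [[D t · u]]_γ iff (μ + [s], s') ∈ [[t]]_{γ₁} for some s ∈ [[u]]_{γ₂} with γ = γ₁ + γ₂, is a simulation from !Γ to (ω → ω')* = !ω* ⊸ ω'*. -/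
universe u

variable (ρ : ℕ → Type) (wρ : ∀ i, IS (ρ i))

/-- Intrinsically typed differential λ-terms: λ-terms together with `0`,
sums `t + u` and differentiation `D t · u`. -/
inductive DTm : List Ty → Ty → Type
  | var {Γ ω} : Var Γ ω → DTm Γ ω
  | app {Γ ω ω'} : DTm Γ (.arrow ω ω') → DTm Γ ω → DTm Γ ω'
  | lam {Γ ω ω'} : DTm (ω :: Γ) ω' → DTm Γ (.arrow ω ω')
  | zero {Γ ω} : DTm Γ ω
  | add {Γ ω} : DTm Γ ω → DTm Γ ω → DTm Γ ω
  | diff {Γ ω ω'} : DTm Γ (.arrow ω ω') → DTm Γ ω → DTm Γ (.arrow ω ω')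

/-- The relational interpretation of differential λ-terms. -/
def dinterp : {Γ : List Ty} → {ω : Ty} → DTm Γ ω → Env ρ Γ → Set (St ρ ω)
  | _, _, .var v, γ => {s | γ = oneAt ρ v s}
  | _, _, .app t u, γ => {s | ∃ (γ₀ : Env ρ _) (L : List (Env ρ _ × St ρ _)),
      (∀ p ∈ L, p.2 ∈ dinterp u p.1) ∧
      γ = Env.add ρ γ₀ (envSum ρ (L.map Prod.fst)) ∧
      ((↑(L.map Prod.snd) : Multiset _), s) ∈ dinterp t γ₀}
  | _, _, .lam t, γ => {p | p.2 ∈ dinterp t (p.1, γ)}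
  | _, _, .zero, _ => ∅
  | _, _, .add t u, γ => dinterp t γ ∪ dinterp u γ
  | _, _, .diff t u, γ => {p | ∃ (γ₁ γ₂ : Env ρ _) (s : St ρ _),
      γ = Env.add ρ γ₁ γ₂ ∧ s ∈ dinterp u γ₂ ∧
      (p.1 + {s}, p.2) ∈ dinterp t γ₁}



section Aux

variable {S : Type u} (w : IS S)

/-- Concatenating multithreaded actions. -/
def appA : ∀ {l₁ l₂ : List S}, listA w l₁ → listA w l₂ → listA w (l₁ ++ l₂)
  | [], _, _, a₂ => a₂
  | _ :: _, _, a₁, a₂ => (a₁.1, appA a₁.2 a₂)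

/-- Splitting a reaction to a concatenated action. -/
def splitD : ∀ {l₁ l₂ : List S} (a₁ : listA w l₁) (a₂ : listA w l₂),
    listD w (l₁ ++ l₂) (appA w a₁ a₂) → listD w l₁ a₁ × listD w l₂ a₂
  | [], _, _, _, d => (⟨⟩, d)
  | _ :: _, _, a₁, a₂, d =>
      ((d.1, (splitD a₁.2 a₂ d.2).1), (splitD a₁.2 a₂ d.2).2)

lemma listN_app : ∀ {l₁ l₂ : List S} (a₁ : listA w l₁) (a₂ : listA w l₂)
    (d : listD w (l₁ ++ l₂) (appA w a₁ a₂)),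
    listN w (l₁ ++ l₂) (appA w a₁ a₂) d
      = listN w l₁ a₁ (splitD w a₁ a₂ d).1 ++ listN w l₂ a₂ (splitD w a₁ a₂ d).2
  | [], _, _, _, _ => rfl
  | s :: l₁, l₂, a₁, a₂, d => by
      show w.n s a₁.1 d.1 :: listN w (l₁ ++ l₂) (appA w a₁.2 a₂) d.2 = _
      rw [listN_app a₁.2 a₂ d.2]; rfl

lemma split_app : ∀ (l₁ l₂ : List S) (a : listA w (l₁ ++ l₂)),
    ∃ (a₁ : listA w l₁) (a₂ : listA w l₂),
      ∀ (d₁ : listD w l₁ a₁) (d₂ : listD w l₂ a₂),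
        ∃ d : listD w (l₁ ++ l₂) a,
          listN w (l₁ ++ l₂) a d = listN w l₁ a₁ d₁ ++ listN w l₂ a₂ d₂
  | [], l₂, a => ⟨⟨⟩, a, fun _ d₂ => ⟨d₂, rfl⟩⟩
  | s :: l₁, l₂, a => by
      obtain ⟨a₁, a₂, h⟩ := split_app l₁ l₂ a.2
      refine ⟨(a.1, a₁), a₂, fun d₁ d₂ => ?_⟩
      obtain ⟨d, hd⟩ := h d₁.2 d₂
      refine ⟨(d₁.1, d), ?_⟩
      show w.n s a.1 d₁.1 :: listN w (l₁ ++ l₂) a.2 d = _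
      rw [hd]; rfl

lemma perm_listA {l l' : List S} (p : l.Perm l') :
    ∀ a : listA w l, ∃ a' : listA w l',
      ∀ d' : listD w l' a', ∃ d : listD w l a,
        (↑(listN w l a d) : Multiset S) = ↑(listN w l' a' d') := by
  induction p with
  | nil => exact fun a => ⟨⟨⟩, fun _ => ⟨⟨⟩, rfl⟩⟩
  | cons x p ih =>
      intro a
      obtain ⟨a', h⟩ := ih a.2
      refine ⟨(a.1, a'), fun d' => ?_⟩
      obtain ⟨d, hd⟩ := h d'.2
      refine ⟨(d'.1, d), ?_⟩
      show (↑(w.n x a.1 d'.1 :: listN w _ a.2 d) : Multiset S)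
        = ↑(w.n x a.1 d'.1 :: listN w _ a' d'.2)
      rw [← Multiset.cons_coe, ← Multiset.cons_coe, hd]
  | swap x y l =>
      intro a
      refine ⟨(a.2.1, a.1, a.2.2), fun d' => ?_⟩
      refine ⟨(d'.2.1, d'.1, d'.2.2), ?_⟩
      show (↑(w.n y a.1 d'.2.1 :: w.n x a.2.1 d'.1 :: listN w l a.2.2 d'.2.2) : Multiset S)
        = ↑(w.n x a.2.1 d'.1 :: w.n y a.1 d'.2.1 :: listN w l a.2.2 d'.2.2)
      rw [← Multiset.cons_coe, ← Multiset.cons_coe, ← Multiset.cons_coe, ← Multiset.cons_coe,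
        Multiset.cons_swap]
  | trans p₁ p₂ ih₁ ih₂ =>
      intro a
      obtain ⟨a'', h₁⟩ := ih₁ a
      obtain ⟨a', h₂⟩ := ih₂ a''
      refine ⟨a', fun d' => ?_⟩
      obtain ⟨d'', hd₂⟩ := h₂ d'
      obtain ⟨d, hd₁⟩ := h₁ d''
      exact ⟨d, hd₁.trans hd₂⟩

lemma bang_split (μ₁ μ₂ : Multiset S) (a : (bang w).A (μ₁ + μ₂)) :
    ∃ (a₁ : (bang w).A μ₁) (a₂ : (bang w).A μ₂),
      ∀ (d₁ : (bang w).D μ₁ a₁) (d₂ : (bang w).D μ₂ a₂),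
        ∃ d : (bang w).D (μ₁ + μ₂) a,
          (bang w).n _ a d = (bang w).n _ a₁ d₁ + (bang w).n _ a₂ d₂ := by
  obtain ⟨l, h, as⟩ := a
  have hp : l.Perm (μ₁.toList ++ μ₂.toList) := by
    rw [← Multiset.coe_eq_coe, h]
    show μ₁ + μ₂ = ↑μ₁.toList + ↑μ₂.toList
    rw [Multiset.coe_toList, Multiset.coe_toList]
  obtain ⟨a', h'⟩ := perm_listA w hp as
  obtain ⟨a₁', a₂', hsp⟩ := split_app w μ₁.toList μ₂.toList a'
  refine ⟨⟨μ₁.toList, Multiset.coe_toList μ₁, a₁'⟩, ⟨μ₂.toList, Multiset.coe_toList μ₂, a₂'⟩,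
    fun d₁ d₂ => ?_⟩
  obtain ⟨d', hd'⟩ := hsp d₁ d₂
  obtain ⟨d, hd⟩ := h' d'
  refine ⟨d, ?_⟩
  show (↑(listN w l as d) : Multiset S) = ↑(listN w _ a₁' d₁) + ↑(listN w _ a₂' d₂)
  rw [hd, hd']
  simp

lemma bang_merge (μ₁ μ₂ : Multiset S) (a₁ : (bang w).A μ₁) (a₂ : (bang w).A μ₂) :
    ∃ a : (bang w).A (μ₁ + μ₂), ∀ d : (bang w).D _ a,
      ∃ (d₁ : (bang w).D μ₁ a₁) (d₂ : (bang w).D μ₂ a₂),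
        (bang w).n _ a d = (bang w).n _ a₁ d₁ + (bang w).n _ a₂ d₂ := by
  obtain ⟨l₁, h₁, as₁⟩ := a₁
  obtain ⟨l₂, h₂, as₂⟩ := a₂
  refine ⟨⟨l₁ ++ l₂, by simp [← h₁, ← h₂], appA w as₁ as₂⟩, fun d => ?_⟩
  refine ⟨(splitD w as₁ as₂ d).1, (splitD w as₁ as₂ d).2, ?_⟩
  show (↑(listN w (l₁ ++ l₂) (appA w as₁ as₂) d) : Multiset S)
    = ↑(listN w l₁ as₁ (splitD w as₁ as₂ d).1) + ↑(listN w l₂ as₂ (splitD w as₁ as₂ d).2)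
  exact (congrArg (fun l : List S => (l : Multiset S)) (listN_app w as₁ as₂ d)).trans
    (Multiset.coe_add _ _).symm

lemma bang_single_dest (s : S) (a : (bang w).A {s}) :
    ∃ b : w.A s, ∀ d' : w.D s b, ∃ d : (bang w).D _ a,
      (bang w).n _ a d = {w.n s b d'} := by
  obtain ⟨l, h, as⟩ := a
  obtain rfl : l = [s] := Multiset.coe_eq_singleton.mp h
  exact ⟨as.1, fun d' => ⟨(d', ⟨⟩), Multiset.coe_singleton _⟩⟩

lemma bang_zero_dest (a : (bang w).A 0) : ∃ _ : (bang w).D 0 a, True := by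
  obtain ⟨l, h, as⟩ := a
  obtain rfl : l = [] := (Multiset.coe_eq_zero l).mp h
  exact ⟨⟨⟩, trivial⟩

lemma bang_zero_n (a : (bang w).A 0) (d : (bang w).D 0 a) :
    (bang w).n 0 a d = 0 := by
  revert d
  obtain ⟨l, h, as⟩ := a
  obtain rfl : l = [] := (Multiset.coe_eq_zero l).mp h
  intro d
  rfl

end Aux

lemma ctx_split : ∀ {Γ : List Ty} (γ₁ γ₂ : Env ρ Γ)
    (a : (ctxIS ρ wρ Γ).A (Env.add ρ γ₁ γ₂)),
    ∃ (a₁ : (ctxIS ρ wρ Γ).A γ₁) (a₂ : (ctxIS ρ wρ Γ).A γ₂),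
      ∀ d₁ d₂, ∃ d, (ctxIS ρ wρ Γ).n _ a d
        = Env.add ρ ((ctxIS ρ wρ Γ).n γ₁ a₁ d₁) ((ctxIS ρ wρ Γ).n γ₂ a₂ d₂)
  | [], _, _, _ => ⟨⟨⟩, ⟨⟩, fun _ _ => ⟨⟨⟩, rfl⟩⟩
  | ω :: Γ, γ₁, γ₂, a => by
      obtain ⟨b₁, b₂, hb⟩ := bang_split (tyIS ρ wρ ω) γ₁.1 γ₂.1 a.1
      obtain ⟨c₁, c₂, hc⟩ := ctx_split γ₁.2 γ₂.2 a.2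
      refine ⟨(b₁, c₁), (b₂, c₂), fun d₁ d₂ => ?_⟩
      obtain ⟨db, hdb⟩ := hb d₁.1 d₂.1
      obtain ⟨dc, hdc⟩ := hc d₁.2 d₂.2
      exact ⟨(db, dc), Prod.ext hdb hdc⟩

lemma ctx_zero_dest : ∀ {Γ : List Ty} (a : (ctxIS ρ wρ Γ).A (Env.zero ρ Γ)),
    ∃ d, (ctxIS ρ wρ Γ).n _ a d = Env.zero ρ Γ
  | [], _ => ⟨⟨⟩, rfl⟩
  | ω :: Γ, a => by
      obtain ⟨db, -⟩ := bang_zero_dest (tyIS ρ wρ ω) a.1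
      obtain ⟨dc, hdc⟩ := ctx_zero_dest a.2
      exact ⟨(db, dc), Prod.ext (bang_zero_n _ a.1 db) hdc⟩

lemma var_sim : ∀ {Γ : List Ty} {ω : Ty} (v : Var Γ ω) (s : St ρ ω)
    (a : (ctxIS ρ wρ Γ).A (oneAt ρ v s)),
    ∃ b : (tyIS ρ wρ ω).A s, ∀ d' : (tyIS ρ wρ ω).D s b,
      ∃ d, (ctxIS ρ wρ Γ).n _ a d = oneAt ρ v ((tyIS ρ wρ ω).n s b d')
  | _, _, .vz, s, a => by
      obtain ⟨b, hb⟩ := bang_single_dest _ s a.1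
      refine ⟨b, fun d' => ?_⟩
      obtain ⟨db, hdb⟩ := hb d'
      obtain ⟨dc, hdc⟩ := ctx_zero_dest ρ wρ a.2
      exact ⟨(db, dc), Prod.ext hdb hdc⟩
  | _, _, .vs v, s, a => by
      obtain ⟨b, hb⟩ := var_sim v s a.2
      refine ⟨b, fun d' => ?_⟩
      obtain ⟨dc, hdc⟩ := hb d'
      obtain ⟨db, -⟩ := bang_zero_dest _ a.1
      exact ⟨(db, dc), Prod.ext (bang_zero_n _ a.1 db) hdc⟩

lemma list_sim {Γ : List Ty} {ω : Ty} (r : Env ρ Γ → St ρ ω → Prop)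
    (hr : IsSim (ctxIS ρ wρ Γ) (tyIS ρ wρ ω) r) :
    ∀ (L : List (Env ρ Γ × St ρ ω)), (∀ p ∈ L, r p.1 p.2) →
      ∀ a : (ctxIS ρ wρ Γ).A (envSum ρ (L.map Prod.fst)),
        ∃ B : (bang (tyIS ρ wρ ω)).A ↑(L.map Prod.snd),
          ∀ dB, ∃ d, ∃ L' : List (Env ρ Γ × St ρ ω),
            (∀ p ∈ L', r p.1 p.2) ∧
            (ctxIS ρ wρ Γ).n _ a d = envSum ρ (L'.map Prod.fst) ∧
            ((bang (tyIS ρ wρ ω)).n _ B dB : Multiset (St ρ ω)) = ↑(L'.map Prod.snd)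
  | [], _, a => by
      refine ⟨⟨[], rfl, ⟨⟩⟩, fun dB => ?_⟩
      obtain ⟨d, hd⟩ := ctx_zero_dest ρ wρ a
      exact ⟨d, [], by simp, hd, rfl⟩
  | p :: L, hL, a => by
      obtain ⟨a₁, a₂, hsp⟩ := ctx_split ρ wρ p.1 (envSum ρ (L.map Prod.fst)) a
      obtain ⟨b, hb⟩ := hr p.1 p.2 (hL p List.mem_cons_self) a₁
      obtain ⟨B, hB⟩ := list_sim r hr L (fun q hq => hL q (List.mem_cons_of_mem _ hq)) a₂
      obtain ⟨lL, hlL, asL⟩ := B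
      refine ⟨⟨p.2 :: lL, ?_, (b, asL)⟩, fun dB => ?_⟩
      · show (↑(p.2 :: lL) : Multiset (St ρ ω)) = ↑(p.2 :: L.map Prod.snd)
        rw [← Multiset.cons_coe, ← Multiset.cons_coe, hlL]
      · obtain ⟨d₁, h₁⟩ := hb dB.1
        obtain ⟨d₂, L', hL', hd, hB'⟩ := hB dB.2
        obtain ⟨d, hd'⟩ := hsp d₁ d₂
        refine ⟨d, ((ctxIS ρ wρ Γ).n p.1 a₁ d₁, (tyIS ρ wρ ω).n p.2 b dB.1) :: L',
          ?_, ?_, ?_⟩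
        · intro q hq
          rcases List.mem_cons.mp hq with rfl | hq'
          · exact h₁
          · exact hL' q hq'
        · exact hd'.trans (congrArg (Env.add ρ ((ctxIS ρ wρ Γ).n p.1 a₁ d₁)) hd)
        · show (tyIS ρ wρ ω).n p.2 b dB.1 ::ₘ
              (bang (tyIS ρ wρ ω)).n (↑(L.map Prod.snd)) ⟨lL, hlL, asL⟩ dB.2
            = (tyIS ρ wρ ω).n p.2 b dB.1 ::ₘ (↑(L'.map Prod.snd) : Multiset (St ρ ω))
          exact congrArg _ hB'

/-- Soundness for differential λ-terms: for any typed differential term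
`Γ ⊢ t : ω` (in particular for `D t · u`, whose interpretation is given by
`(μ, s') ∈ [[D t · u]]_γ` iff `(μ + [s], s') ∈ [[t]]_{γ₁}` for some
`s ∈ [[u]]_{γ₂}` with `γ = γ₁ + γ₂`), the relation `{(γ, s) | s ∈ [[t]]_γ}`
is a simulation from `!Γ` to `ω*`. -/
theorem dsoundness (ρ : ℕ → Type) (wρ : ∀ i, IS (ρ i))
    {Γ : List Ty} {ω : Ty} (t : DTm Γ ω) :
    IsSim (ctxIS ρ wρ Γ) (tyIS ρ wρ ω) (fun γ s => s ∈ dinterp ρ t γ) := by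
  induction t with
  | var v =>
      intro γ s hs a
      replace hs : γ = oneAt ρ v s := hs
      subst hs
      obtain ⟨b, hb⟩ := var_sim ρ wρ v s a
      exact ⟨b, fun d' => hb d'⟩
  | app t u iht ihu =>
      intro γ s hs a
      obtain ⟨γ₀, L, hL, rfl, hts⟩ := hs
      obtain ⟨a₀, aL, hsp⟩ := ctx_split ρ wρ γ₀ (envSum ρ (L.map Prod.fst)) a
      obtain ⟨B, hB⟩ := list_sim ρ wρ (fun γ s => s ∈ dinterp ρ u γ) ihu L hL aL
      obtain ⟨aT, hT⟩ := iht γ₀ (↑(L.map Prod.snd), s) hts a₀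
      refine ⟨aT.1 B, fun d₂ => ?_⟩
      obtain ⟨d₀, hrel⟩ := hT ⟨B, d₂⟩
      obtain ⟨dL, L', hL', hdL, hbn⟩ := hB (aT.2 B d₂)
      obtain ⟨d, hd⟩ := hsp d₀ dL
      refine ⟨d, (ctxIS ρ wρ _).n γ₀ a₀ d₀, L', hL', ?_, ?_⟩
      · exact hd.trans (congrArg (Env.add ρ ((ctxIS ρ wρ _).n γ₀ a₀ d₀)) hdL)
      · exact hbn ▸ hrel
  | lam t ih =>
      intro γ s hs a
      classical
      choose f hf using fun b : (bang (tyIS ρ wρ _)).A s.1 => ih (s.1, γ) s.2 hs (b, a)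
      choose h hh using hf
      refine ⟨⟨f, fun b d₂ => (h b d₂).1⟩, fun d => ?_⟩
      exact ⟨(h d.1 d.2).2, hh d.1 d.2⟩
  | zero =>
      intro γ s hs a
      exact hs.elim
  | add t u iht ihu =>
      intro γ s hs a
      rcases hs with h | h
      · obtain ⟨b, hb⟩ := iht γ s h a
        refine ⟨b, fun d' => ?_⟩
        obtain ⟨d, hd⟩ := hb d'
        exact ⟨d, Or.inl hd⟩
      · obtain ⟨b, hb⟩ := ihu γ s h a
        refine ⟨b, fun d' => ?_⟩
        obtain ⟨d, hd⟩ := hb d'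
        exact ⟨d, Or.inr hd⟩
  | diff t u iht ihu =>
      intro γ s hs a
      obtain ⟨γ₁, γ₂, s₀, rfl, hu, ht⟩ := hs
      obtain ⟨a₁, a₂, hsp⟩ := ctx_split ρ wρ γ₁ γ₂ a
      obtain ⟨b, hb⟩ := ihu γ₂ s₀ hu a₂
      obtain ⟨aT, hT⟩ := iht γ₁ (s.1 + {s₀}, s.2) ht a₁
      classical
      choose M hM using fun B : (bang (tyIS ρ wρ _)).A s.1 =>
        bang_merge (tyIS ρ wρ _) s.1 {s₀} B ⟨[s₀], Multiset.coe_singleton s₀, (b, ⟨⟩)⟩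
      choose mD1 mD2 hm using hM
      refine ⟨⟨fun B => aT.1 (M B), fun B d₂ => mD1 B (aT.2 (M B) d₂)⟩, fun d => ?_⟩
      obtain ⟨B, d₂⟩ := d
      obtain ⟨dc₁, hrel⟩ := hT ⟨M B, d₂⟩
      obtain ⟨dc₂, hrelu⟩ := hb (mD2 B (aT.2 (M B) d₂)).1
      obtain ⟨dd, hdd⟩ := hsp dc₁ dc₂
      refine ⟨dd, (ctxIS ρ wρ _).n γ₁ a₁ dc₁, (ctxIS ρ wρ _).n γ₂ a₂ dc₂,
        (tyIS ρ wρ _).n s₀ b (mD2 B (aT.2 (M B) d₂)).1, hdd, hrelu, ?_⟩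
      have hσn : (bang (tyIS ρ wρ _)).n {s₀} ⟨[s₀], Multiset.coe_singleton s₀, (b, ⟨⟩)⟩
            (mD2 B (aT.2 (M B) d₂))
          = {(tyIS ρ wρ _).n s₀ b (mD2 B (aT.2 (M B) d₂)).1} :=
        Multiset.coe_singleton _
      have key := hm B (aT.2 (M B) d₂)
      rw [hσn] at key
      have hrel' : ((bang (tyIS ρ wρ _)).n (s.1 + {s₀}) (M B) (aT.2 (M B) d₂),
          (tyIS ρ wρ _).n s.2 (aT.1 (M B)) d₂) ∈ dinterp ρ t ((ctxIS ρ wρ _).n γ₁ a₁ dc₁) := hrel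
      rw [key] at hrel'
      exact hrel'
end
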